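/- Let k be a field and G a finite group with H^1(G, k) = 0, where k denotes the trivial kG-module. Let M be a finite-dimensional kG-module with composition factors W_1, ..., W_r, exactly m of which are trivial, and set n = Σ_i dim_k H^1(G, W_i). If n < m, then the fixed-point subspace M^G has dimension at least m − n. -/

import Mathlib

open CategoryTheory

noncomputable section

/-- The `k`-linear representation of `G` attached to a module `M` over the group
algebra `k[G]` (defined on the type synonym `RestrictScalars k (MonoidAlgebra k G) M`). -/
def grpRep (k G : Type) [Field k] [Group G] (M : Type) [AddCommGroup M]
    [Module (MonoidAlgebra k G) M] : Rep k G :=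
  @Rep.of k G _ _ _ _ (RestrictScalars.module k _ M)
    (Representation.ofModule (k := k) (G := G) M)

/-- The dimension over `k` of the first group cohomology `H¹(G, M)` of a `k[G]`-module `M`. -/
def h1Dim (k G : Type) [Field k] [Group G] (M : Type) [AddCommGroup M]
    [Module (MonoidAlgebra k G) M] : ℕ :=
  Module.finrank k (groupCohomology.H1 (grpRep k G M))

/-- A `k[G]`-module is trivial if it is isomorphic to the 1-dimensional trivial module `k`. -/
def IsTrivialFactor (k G : Type) [Field k] [Group G] (M : Type) [AddCommGroup M]
    [Module (MonoidAlgebra k G) M] : Prop :=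
  Nonempty (grpRep k G M ≅ Rep.trivial k G k)

/-- The subquotient `N'/N` attached to a pair of submodules `N ≤ N'`. -/
abbrev Subquot {k G : Type} [Field k] [Group G] {M : Type} [AddCommGroup M]
    [Module (MonoidAlgebra k G) M] (N N' : Submodule (MonoidAlgebra k G) M) : Type :=
  N' ⧸ Submodule.comap N'.subtype N

set_option maxHeartbeats 1000000

namespace Statement0Aux
open groupCohomology

variable {k G : Type} [Field k] [Group G]

instance rsModule {M : Type} [AddCommGroup M] [Module (MonoidAlgebra k G) M] :
    @Module k (RestrictScalars k (MonoidAlgebra k G) M)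
      (@DivisionSemiring.toSemiring k (@Semifield.toDivisionSemiring k (@Field.toSemifield k _)))
      (@AddCommGroup.toAddCommMonoid _ inferInstance) := RestrictScalars.module k _ M
instance rsModule' {M : Type} [AddCommGroup M] [Module (MonoidAlgebra k G) M] :
    @Module k (RestrictScalars k (MonoidAlgebra k G) M)
      (@DivisionSemiring.toSemiring k (@DivisionRing.toDivisionSemiring k (@Field.toDivisionRing k _)))
      (@AddCommGroup.toAddCommMonoid _ inferInstance) := RestrictScalars.module k _ M

/-! ### Restriction of scalars plumbing -/

/-- Restrict an `k[G]`-linear map to a `k`-linear map on `RestrictScalars`. -/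
def rsMap {M₁ M₂ : Type} [AddCommGroup M₁] [Module (MonoidAlgebra k G) M₁]
    [AddCommGroup M₂] [Module (MonoidAlgebra k G) M₂]
    (f : M₁ →ₗ[MonoidAlgebra k G] M₂) :
    RestrictScalars k (MonoidAlgebra k G) M₁ →ₗ[k] RestrictScalars k (MonoidAlgebra k G) M₂ where
  toFun x := (RestrictScalars.addEquiv k (MonoidAlgebra k G) M₂).symm
    (f (RestrictScalars.addEquiv k (MonoidAlgebra k G) M₁ x))
  map_add' x y := by simp
  map_smul' c x := by
    simp only [RestrictScalars.addEquiv_map_smul, map_smul, RingHom.id_apply]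
    rw [RestrictScalars.addEquiv_symm_map_algebraMap_smul]

theorem ofModule_apply' (M : Type) [AddCommGroup M] [Module (MonoidAlgebra k G) M] (g : G)
    (x : RestrictScalars k (MonoidAlgebra k G) M) :
    RestrictScalars.addEquiv k (MonoidAlgebra k G) M
        ((Representation.ofModule (k := k) (G := G) M) g x)
      = MonoidAlgebra.of k G g • RestrictScalars.addEquiv k (MonoidAlgebra k G) M x := by
  have h := Representation.ofModule_asAlgebraHom_apply_apply (k := k) (G := G) (M := M)
    (MonoidAlgebra.of k G g) x
  rw [Representation.asAlgebraHom_of] at h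
  rw [h]
  simp

theorem rsMap_comm {M₁ M₂ : Type} [AddCommGroup M₁] [Module (MonoidAlgebra k G) M₁]
    [AddCommGroup M₂] [Module (MonoidAlgebra k G) M₂]
    (f : M₁ →ₗ[MonoidAlgebra k G] M₂) (g : G) (x) :
    rsMap f ((Representation.ofModule (k := k) (G := G) M₁) g x)
      = (Representation.ofModule (k := k) (G := G) M₂) g (rsMap f x) := by
  apply (RestrictScalars.addEquiv k (MonoidAlgebra k G) M₂).injective
  rw [ofModule_apply']
  show f _ = _
  rw [ofModule_apply', map_smul]
  rfl

/-- `k`-linear equiv on restricted scalars from a `k[G]`-linear equiv. -/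
def rsEquiv {M₁ M₂ : Type} [AddCommGroup M₁] [Module (MonoidAlgebra k G) M₁]
    [AddCommGroup M₂] [Module (MonoidAlgebra k G) M₂] (e : M₁ ≃ₗ[MonoidAlgebra k G] M₂) :
    RestrictScalars k (MonoidAlgebra k G) M₁ ≃ₗ[k] RestrictScalars k (MonoidAlgebra k G) M₂ :=
  LinearEquiv.ofLinear (rsMap e.toLinearMap) (rsMap e.symm.toLinearMap)
    (by ext x; simp [rsMap]) (by ext x; simp [rsMap])

/-- Isomorphism of `grpRep`s induced by a `k[G]`-linear equiv. -/
def grpRepIso {M₁ M₂ : Type} [AddCommGroup M₁] [Module (MonoidAlgebra k G) M₁]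
    [AddCommGroup M₂] [Module (MonoidAlgebra k G) M₂] (e : M₁ ≃ₗ[MonoidAlgebra k G] M₂) :
    grpRep k G M₁ ≅ grpRep k G M₂ :=
  Rep.mkIso (Representation.Equiv.mk (rsEquiv (k := k) (G := G) e)
    (fun g => by
      ext x
      exact rsMap_comm e.toLinearMap g x))

def rsSelfEquiv (M : Type) [AddCommGroup M] [Module (MonoidAlgebra k G) M]
    [Module k M] [IsScalarTower k (MonoidAlgebra k G) M] :
    M ≃ₗ[k] RestrictScalars k (MonoidAlgebra k G) M where
  toFun x := (RestrictScalars.addEquiv k (MonoidAlgebra k G) M).symm x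
  invFun := RestrictScalars.addEquiv k (MonoidAlgebra k G) M
  map_add' x y := by simp
  map_smul' c x := by
    rw [RingHom.id_apply]
    conv_rhs => rw [RestrictScalars.smul_def]
    simp only [AddEquiv.apply_symm_apply]
    rw [algebraMap_smul]
  left_inv x := by simp
  right_inv x := by simp

theorem findim_rs (M : Type) [AddCommGroup M] [Module (MonoidAlgebra k G) M]
    [Module k M] [IsScalarTower k (MonoidAlgebra k G) M] [FiniteDimensional k M] :
    FiniteDimensional k (RestrictScalars k (MonoidAlgebra k G) M) :=
  Module.Finite.equiv (rsSelfEquiv M)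

/-! ### Transport of invariants and `H¹` along equivariant equivalences -/

section equivs
variable {A B : Rep k G} (e : A ≃ₗ[k] B) (he : ∀ (g : G) (x : A), e (A.ρ g x) = B.ρ g (e x))

/-- invariants equiv from an equivariant linear equiv -/
def invariantsEquiv : A.ρ.invariants ≃ₗ[k] B.ρ.invariants where
  toFun x := ⟨e x, fun g => by rw [← he, x.2 g]⟩
  invFun y := ⟨e.symm y, fun g => e.injective (by rw [he, e.apply_symm_apply, y.2 g])⟩
  map_add' x y := Subtype.ext (by simp)
  map_smul' c x := Subtype.ext (by simp)
  left_inv x := Subtype.ext (by simp)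
  right_inv y := Subtype.ext (by simp)

/-- cocycles equiv -/
def cocEquiv : cocycles₁ A ≃ₗ[k] cocycles₁ B where
  toFun f := ⟨fun g => e (f g), (mem_cocycles₁_iff _).2 fun g h => by
    rw [show (f : G → A) (g * h) = A.ρ g (f h) + f g
      from (mem_cocycles₁_iff (f : G → A)).1 f.2 g h]
    simp [he]⟩
  invFun f := ⟨fun g => e.symm (f g), (mem_cocycles₁_iff _).2 fun g h => by
    rw [show (f : G → B) (g * h) = B.ρ g (f h) + f g
      from (mem_cocycles₁_iff (f : G → B)).1 f.2 g h]
    refine e.injective ?_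
    simp [he]⟩
  map_add' x y := Subtype.ext (funext fun g => map_add e (x g) (y g))
  map_smul' c x := Subtype.ext (funext fun g => map_smul e c (x g))
  left_inv x := Subtype.ext (funext fun g => e.symm_apply_apply (x g))
  right_inv y := Subtype.ext (funext fun g => e.apply_symm_apply (y g))

/-- H1 equiv -/
def h1Equiv : H1 A ≃ₗ[k] H1 B :=
  ((groupCohomology.functor k G 1).mapIso
    (Rep.mkIso (Representation.Equiv.mk e (fun g => LinearMap.ext (he g))))).toLinearEquiv

end equivs

/-- linear equiv from a Rep iso -/
def isoLequiv {A B : Rep k G} (i : A ≅ B) : A ≃ₗ[k] B :=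
  LinearEquiv.ofLinear i.hom.hom.toLinearMap i.inv.hom.toLinearMap
    (by ext x; exact Rep.hom_inv_apply (A := A) (B := B) i x)
    (by ext x; exact Rep.inv_hom_apply (A := A) (B := B) i x)

theorem isoLequiv_comm {A B : Rep k G} (i : A ≅ B) (g : G) (x : A) :
    isoLequiv i (A.ρ g x) = B.ρ g (isoLequiv i x) :=
  Rep.hom_comm_apply i.hom g x

/-! ### The key cohomological inequality -/

theorem core [Finite G] {A B C : Rep k G} [FiniteDimensional k B]
    (ι : A →ₗ[k] B) (π : (B : Type) →ₗ[k] C)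
    (hι : ∀ (g : G) (x : A), ι (A.ρ g x) = B.ρ g (ι x))
    (hπ : ∀ (g : G) (x : B), π (B.ρ g x) = C.ρ g (π x))
    (hinj : Function.Injective ι) (hsurj : Function.Surjective π)
    (hexact : LinearMap.ker π = LinearMap.range ι) :
    Module.finrank k A.ρ.invariants + Module.finrank k C.ρ.invariants ≤
      Module.finrank k B.ρ.invariants + Module.finrank k (H1 A) := by
  have : Fintype G := Fintype.ofFinite G
  haveI hA : FiniteDimensional k A := FiniteDimensional.of_injective ι hinj
  haveI hC : FiniteDimensional k C := Module.Finite.of_surjective π hsurj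
  haveI hGA : FiniteDimensional k (G → A) := inferInstance
  haveI hcoc : FiniteDimensional k (cocycles₁ A) :=
    FiniteDimensional.finiteDimensional_submodule _
  haveI : FiniteDimensional k (H1 A) :=
    Module.Finite.of_surjective (H1π A).hom ((ModuleCat.epi_iff_surjective _).1 inferInstance)
  -- φ : B^G → C^G
  have hφmem : ∀ x ∈ B.ρ.invariants, π x ∈ C.ρ.invariants := fun x hx g => by
    rw [← hπ, hx g]
  set φ : B.ρ.invariants →ₗ[k] C.ρ.invariants := π.restrict hφmem with hφ
  -- ψ : A^G → B^G
  have hψmem : ∀ x ∈ A.ρ.invariants, ι x ∈ B.ρ.invariants := fun x hx g => by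
    rw [← hι, hx g]
  set ψ : A.ρ.invariants →ₗ[k] B.ρ.invariants := ι.restrict hψmem with hψ
  have hψinj : Function.Injective ψ := fun x y hxy =>
    Subtype.ext (hinj (congrArg Subtype.val hxy))
  have hrange : LinearMap.range ψ = LinearMap.ker φ := by
    ext x
    constructor
    · rintro ⟨a, rfl⟩
      have : π (ι a) = 0 := by
        rw [← LinearMap.mem_ker, hexact]; exact ⟨a, rfl⟩
      exact Subtype.ext this
    · intro hx
      have h0 : π (x : B) = 0 := congrArg Subtype.val hx
      rw [← LinearMap.mem_ker, hexact] at h0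
      obtain ⟨a, ha⟩ := h0
      have hainv : a ∈ A.ρ.invariants := fun g => by
        apply hinj
        rw [hι, ha]
        exact x.2 g
      exact ⟨⟨a, hainv⟩, Subtype.ext ha⟩
  -- section s of π
  obtain ⟨s, hs⟩ := π.exists_rightInverse_of_surjective (LinearMap.range_eq_top.2 hsurj)
  have hsq : ∀ y : C, π (s y) = y := fun y => congrArg (fun f => f y) hs
  -- the equiv onto the range of ι
  have hιval : ∀ (y : B) (hy : y ∈ LinearMap.range ι),
      ι ((LinearEquiv.ofInjective ι hinj).symm ⟨y, hy⟩) = y := by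
    intro y hy
    conv_rhs => rw [show y = ((⟨y, hy⟩ : LinearMap.range ι) : B) from rfl,
      ← (LinearEquiv.ofInjective ι hinj).apply_symm_apply ⟨y, hy⟩]
    exact (LinearEquiv.ofInjective_apply ι _).symm
  -- u q g = ρ_B g (s q) - s q lies in ker π = range ι for invariant q
  have humem : ∀ (q : C.ρ.invariants) (g : G),
      B.ρ g (s (q : C)) - s (q : C) ∈ LinearMap.range ι := fun q g => by
    rw [← hexact, LinearMap.mem_ker, map_sub, hπ, hsq, q.2 g, sub_self]
  -- F : C^G → (G → A)
  set F0 : C.ρ.invariants → G → A := fun q g =>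
    (LinearEquiv.ofInjective ι hinj).symm ⟨B.ρ g (s (q : C)) - s (q : C), humem q g⟩ with hF0
  have hFval : ∀ (q : C.ρ.invariants) (g : G), ι (F0 q g) = B.ρ g (s (q : C)) - s (q : C) :=
    fun q g => hιval _ _
  set F : C.ρ.invariants →ₗ[k] (G → A) :=
    { toFun := F0
      map_add' := fun x y => funext fun g => hinj (by
        rw [hFval, show ((F0 x + F0 y) g) = F0 x g + F0 y g from rfl, map_add, hFval, hFval]
        simp only [Submodule.coe_add, map_add]
        abel)
      map_smul' := fun c x => funext fun g => hinj (by
        rw [hFval, RingHom.id_apply]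
        rw [show (c • F0 x) g = c • F0 x g from rfl, map_smul, hFval]
        simp only [Submodule.coe_smul, map_smul, smul_sub]) } with hF
  have hFcoc : ∀ q, F q ∈ cocycles₁ A := fun q => (mem_cocycles₁_iff _).2 fun g h => hinj (by
    show ι (F0 q (g * h)) = ι (A.ρ g (F0 q h) + F0 q g)
    rw [hFval, map_add, hι, hFval, hFval, map_mul, Module.End.mul_apply, map_sub]
    abel)
  set Fc : C.ρ.invariants →ₗ[k] cocycles₁ A := F.codRestrict _ hFcoc with hFc
  set δ : C.ρ.invariants →ₗ[k] H1 A := (H1π A).hom.comp Fc with hδ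
  have hker : LinearMap.ker δ ≤ LinearMap.range φ := by
    intro q hq
    have : ⇑(Fc q) ∈ coboundaries₁ A := (H1π_eq_zero_iff _).1 hq
    obtain ⟨x, hx⟩ := this
    have hxg : ∀ g : G, A.ρ g x - x = F0 q g := fun g => by
      have := congrFun hx g
      simp [d₀₁_hom_apply] at this
      exact this
    set b : B := s (q : C) - ι x with hb
    have hbinv : b ∈ B.ρ.invariants := fun g => by
      rw [hb, map_sub, ← hι]
      have h1 := hFval q g
      have h2 : ι (A.ρ g x) = ι (F0 q g) + ι x := by rw [← hxg g, map_sub]; abel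
      rw [h2, h1]
      abel
    refine ⟨⟨b, hbinv⟩, Subtype.ext ?_⟩
    show π b = (q : C)
    have : π (ι x) = 0 := by rw [← LinearMap.mem_ker, hexact]; exact ⟨x, rfl⟩
    rw [hb, map_sub, hsq, this, sub_zero]
  -- dimension count
  have e1 : Module.finrank k B.ρ.invariants =
      Module.finrank k A.ρ.invariants + Module.finrank k (LinearMap.range φ) := by
    have h2 := LinearMap.finrank_range_add_finrank_ker φ
    have h3 : Module.finrank k (LinearMap.ker φ) = Module.finrank k A.ρ.invariants := by
      rw [← hrange, LinearMap.finrank_range_of_inj hψinj]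
    omega
  have e2 : Module.finrank k C.ρ.invariants ≤
      Module.finrank k (LinearMap.range φ) + Module.finrank k (H1 A) := by
    have h2 := LinearMap.finrank_range_add_finrank_ker δ
    have h3 : Module.finrank k (LinearMap.ker δ) ≤ Module.finrank k (LinearMap.range φ) :=
      Submodule.finrank_mono hker
    have h4 : Module.finrank k (LinearMap.range δ) ≤ Module.finrank k (H1 A) :=
      (LinearMap.range δ).finrank_le
    omega
  omega

/-! ### Transfer lemmas -/

section transfer
variable {M₁ M₂ : Type} [AddCommGroup M₁] [Module (MonoidAlgebra k G) M₁]
    [AddCommGroup M₂] [Module (MonoidAlgebra k G) M₂]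

theorem h1Dim_congr (e : M₁ ≃ₗ[MonoidAlgebra k G] M₂) : h1Dim k G M₁ = h1Dim k G M₂ :=
  LinearEquiv.finrank_eq
    (h1Equiv (isoLequiv (grpRepIso (k := k) e)) (isoLequiv_comm _))

theorem isTrivialFactor_congr (e : M₁ ≃ₗ[MonoidAlgebra k G] M₂) :
    IsTrivialFactor k G M₁ ↔ IsTrivialFactor k G M₂ :=
  ⟨fun ⟨i⟩ => ⟨(grpRepIso (k := k) e).symm ≪≫ i⟩, fun ⟨i⟩ => ⟨grpRepIso (k := k) e ≪≫ i⟩⟩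

theorem h1Dim_eq_zero_of_trivial
    (hk : Subsingleton (groupCohomology.H1 (Rep.trivial k G k)))
    {X : Type} [AddCommGroup X] [Module (MonoidAlgebra k G) X]
    (h : IsTrivialFactor k G X) : h1Dim k G X = 0 := by
  obtain ⟨i⟩ := h
  have e := h1Equiv (isoLequiv i) (isoLequiv_comm i)
  haveI : Subsingleton (H1 (grpRep k G X)) := Equiv.subsingleton e.toEquiv
  exact Module.finrank_zero_of_subsingleton

theorem invDim_eq_one_of_trivial
    {X : Type} [AddCommGroup X] [Module (MonoidAlgebra k G) X]
    (h : IsTrivialFactor k G X) :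
    Module.finrank k (grpRep k G X).ρ.invariants = 1 := by
  obtain ⟨i⟩ := h
  have e := invariantsEquiv (isoLequiv i) (isoLequiv_comm i)
  show Module.finrank k (grpRep k G X).ρ.invariants = 1
  rw [LinearEquiv.finrank_eq e]
  rw [Representation.invariants_eq_top]
  rw [finrank_top]
  exact Module.finrank_self k
end transfer

/-! ### Subquotient isomorphisms -/

section subquot
variable {M : Type} [AddCommGroup M] [Module (MonoidAlgebra k G) M]

def botQuotEquiv (N₀ W : Submodule (MonoidAlgebra k G) M) (h : N₀ = ⊥) :
    Subquot N₀ W ≃ₗ[MonoidAlgebra k G] W :=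
  Submodule.quotEquivOfEqBot _ (by
    rw [h, Submodule.comap_bot, Submodule.ker_subtype])

/-- third isomorphism for subquotients under `mkQ`. -/
def thirdIso {W X Y : Submodule (MonoidAlgebra k G) M} (hWX : W ≤ X) :
    Subquot (X.map W.mkQ) (Y.map W.mkQ) ≃ₗ[MonoidAlgebra k G] Subquot X Y := by
  set g : Y →ₗ[MonoidAlgebra k G] ↥(Y.map W.mkQ) :=
    (W.mkQ.comp Y.subtype).codRestrict _ (fun y => Submodule.mem_map_of_mem y.2) with hg
  set f : Y →ₗ[MonoidAlgebra k G] Subquot (X.map W.mkQ) (Y.map W.mkQ) :=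
    (Submodule.comap (Y.map W.mkQ).subtype (X.map W.mkQ)).mkQ.comp g with hf
  have hsurj : Function.Surjective f := by
    rintro z
    obtain ⟨w, rfl⟩ := Submodule.mkQ_surjective _ z
    obtain ⟨y, hy, hy2⟩ := w.2
    exact ⟨⟨y, hy⟩, by
      rw [hf]
      simp only [LinearMap.comp_apply, Submodule.mkQ_apply]
      congr 1
      exact Subtype.ext hy2⟩
  have hker : LinearMap.ker f = Submodule.comap Y.subtype X := by
    ext y
    rw [hf]
    simp only [LinearMap.mem_ker, LinearMap.comp_apply, Submodule.mkQ_apply,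
      Submodule.Quotient.mk_eq_zero, Submodule.mem_comap]
    have : (Submodule.map W.mkQ Y).subtype (g y) = W.mkQ (Y.subtype y) := rfl
    rw [this]
    constructor
    · intro hy
      have := Submodule.comap_map_mkQ W X ▸ Submodule.mem_comap.2 hy
      rwa [sup_eq_right.2 hWX] at this
    · intro hy
      exact Submodule.mem_map_of_mem hy
  exact ((Submodule.quotEquivOfEq _ _ hker).symm.trans
    (f.quotKerEquivOfSurjective hsurj)).symm

end subquot

/-! ### The inequality for a submodule and its quotient -/

theorem core_applied [Finite G] (M : Type) [AddCommGroup M] [Module (MonoidAlgebra k G) M]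
    [Module k M] [IsScalarTower k (MonoidAlgebra k G) M] [FiniteDimensional k M]
    (W : Submodule (MonoidAlgebra k G) M) :
    Module.finrank k (grpRep k G ↥W).ρ.invariants
      + Module.finrank k (grpRep k G (M ⧸ W)).ρ.invariants
      ≤ Module.finrank k (grpRep k G M).ρ.invariants
        + h1Dim k G ↥W := by
  haveI : FiniteDimensional k (RestrictScalars k (MonoidAlgebra k G) M) := findim_rs M
  have hinj : Function.Injective (rsMap (k := k) (G := G) W.subtype) := by
    intro x y h
    have h1 := congrArg (RestrictScalars.addEquiv k (MonoidAlgebra k G) M) h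
    simp only [rsMap, LinearMap.coe_mk, AddHom.coe_mk, AddEquiv.apply_symm_apply] at h1
    exact (RestrictScalars.addEquiv k (MonoidAlgebra k G) ↥W).injective
      (Submodule.injective_subtype W h1)
  have hsurj : Function.Surjective (rsMap (k := k) (G := G) W.mkQ) := by
    intro z
    obtain ⟨m, hm⟩ := Submodule.mkQ_surjective W
      (RestrictScalars.addEquiv k (MonoidAlgebra k G) (M ⧸ W) z)
    refine ⟨(RestrictScalars.addEquiv k (MonoidAlgebra k G) M).symm m, ?_⟩
    apply (RestrictScalars.addEquiv k (MonoidAlgebra k G) (M ⧸ W)).injective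
    simp only [rsMap, LinearMap.coe_mk, AddHom.coe_mk, AddEquiv.apply_symm_apply]
    exact hm
  have hexact : LinearMap.ker (rsMap (k := k) (G := G) W.mkQ)
      = LinearMap.range (rsMap (k := k) (G := G) W.subtype) := by
    ext x
    simp only [LinearMap.mem_ker, LinearMap.mem_range]
    constructor
    · intro hx
      have h1 : W.mkQ (RestrictScalars.addEquiv k (MonoidAlgebra k G) M x) = 0 := by
        have h2 := congrArg (RestrictScalars.addEquiv k (MonoidAlgebra k G) (M ⧸ W)) hx
        simpa [rsMap] using h2
      rw [Submodule.mkQ_apply, Submodule.Quotient.mk_eq_zero] at h1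
      refine ⟨(RestrictScalars.addEquiv k (MonoidAlgebra k G) ↥W).symm ⟨_, h1⟩, ?_⟩
      apply (RestrictScalars.addEquiv k (MonoidAlgebra k G) M).injective
      simp [rsMap]
    · rintro ⟨w, rfl⟩
      apply (RestrictScalars.addEquiv k (MonoidAlgebra k G) (M ⧸ W)).injective
      simp only [rsMap, LinearMap.coe_mk, AddHom.coe_mk, AddEquiv.apply_symm_apply, map_zero]
      rw [Submodule.mkQ_apply, Submodule.Quotient.mk_eq_zero]
      exact (RestrictScalars.addEquiv k (MonoidAlgebra k G) ↥W w).2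
  haveI : FiniteDimensional k ((grpRep k G M : Rep k G) : Type) := findim_rs M
  exact core (A := grpRep k G ↥W) (B := grpRep k G M) (C := grpRep k G (M ⧸ W))
    (show RestrictScalars k (MonoidAlgebra k G) ↥W →ₗ[k] RestrictScalars k (MonoidAlgebra k G) M
      from rsMap W.subtype)
    (show RestrictScalars k (MonoidAlgebra k G) M →ₗ[k]
        RestrictScalars k (MonoidAlgebra k G) (M ⧸ W) from rsMap W.mkQ)
    (fun g x => rsMap_comm W.subtype g x)
    (fun g x => rsMap_comm W.mkQ g x)
    hinj hsurj hexact

/-! ### The induction -/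

theorem cardsum (s : ℕ) (p : Fin s → Prop) [DecidablePred p] :
    Nat.card {i // p i} = ∑ i : Fin s, if p i then 1 else 0 := by
  rw [Nat.card_eq_fintype_card, Fintype.card_subtype, Finset.card_filter]

theorem main [Finite G] (hk : Subsingleton (groupCohomology.H1 (Rep.trivial k G k)))
    (r : ℕ) :
    ∀ (M : Type) [inst1 : AddCommGroup M] [inst2 : Module (MonoidAlgebra k G) M]
      [inst3 : Module k M] [inst4 : IsScalarTower k (MonoidAlgebra k G) M]
      [inst5 : FiniteDimensional k M]
      (N : Fin (r + 1) → Submodule (MonoidAlgebra k G) M),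
      Monotone N → N 0 = ⊥ → N (Fin.last r) = ⊤ →
      Nat.card {i : Fin r // IsTrivialFactor k G (Subquot (N i.castSucc) (N i.succ))}
        - ∑ i : Fin r, h1Dim k G (Subquot (N i.castSucc) (N i.succ))
        ≤ Module.finrank k (grpRep k G M).ρ.invariants := by
  induction r with
  | zero =>
    intro M _ _ _ _ _ N hmono hbot htop
    have : Nat.card {i : Fin 0 // IsTrivialFactor k G (Subquot (N i.castSucc) (N i.succ))} = 0 :=
      Nat.card_of_isEmpty
    omega
  | succ r ih =>
    intro M _ _ _ _ _ N hmono hbot htop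
    classical
    set W : Submodule (MonoidAlgebra k G) M := N ((0 : Fin (r + 1)).succ) with hW
    set N' : Fin (r + 1) → Submodule (MonoidAlgebra k G) (M ⧸ W) :=
      fun j => (N j.succ).map W.mkQ with hN'
    have hmono' : Monotone N' := fun i j hij =>
      Submodule.map_mono (hmono (Fin.succ_le_succ_iff.2 hij))
    have hbot' : N' 0 = ⊥ := by
      show (N ((0 : Fin (r + 1)).succ)).map W.mkQ = ⊥
      apply eq_bot_iff.2
      rw [Submodule.map_le_iff_le_comap, Submodule.comap_bot, Submodule.ker_mkQ]
    have htop' : N' (Fin.last r) = ⊤ := by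
      show (N (Fin.last r).succ).map W.mkQ = ⊤
      rw [Fin.succ_last, htop, Submodule.map_top, Submodule.range_mkQ]
    have hfac : ∀ j : Fin r, Nonempty
        (Subquot (N' j.castSucc) (N' j.succ) ≃ₗ[MonoidAlgebra k G]
          Subquot (N j.succ.castSucc) (N j.succ.succ)) := fun j => by
      have h1 : W ≤ N j.succ.castSucc := hmono (by
        rw [Fin.le_def]
        simp only [Fin.val_succ, Fin.coe_castSucc, Fin.val_zero]
        omega)
      have h2 : N' j.castSucc = (N j.succ.castSucc).map W.mkQ := by
        show (N j.castSucc.succ).map W.mkQ = _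
        rw [Fin.succ_castSucc]
      have h3 : N' j.succ = (N j.succ.succ).map W.mkQ := rfl
      rw [h2, h3]
      exact ⟨thirdIso h1⟩
    have IH := ih (M ⧸ W) N' hmono' hbot' htop'
    have e0 : Subquot (N (0 : Fin (r + 1)).castSucc) (N (0 : Fin (r + 1)).succ)
        ≃ₗ[MonoidAlgebra k G] ↥W :=
      botQuotEquiv _ _ (by rw [Fin.castSucc_zero, hbot])
    have hcore := core_applied M W
    set P : Fin (r + 1) → Prop :=
      fun i => IsTrivialFactor k G (Subquot (N i.castSucc) (N i.succ)) with hP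
    set H : Fin (r + 1) → ℕ :=
      fun i => h1Dim k G (Subquot (N i.castSucc) (N i.succ)) with hH
    have hm : Nat.card {i : Fin (r + 1) // P i}
        = (if P 0 then 1 else 0) + ∑ j : Fin r, (if P j.succ then 1 else 0) := by
      rw [cardsum, Fin.sum_univ_succ]
    have hn : ∑ i : Fin (r + 1), H i = H 0 + ∑ j : Fin r, H j.succ := Fin.sum_univ_succ H
    have hIHm : Nat.card {j : Fin r //
        IsTrivialFactor k G (Subquot (N' j.castSucc) (N' j.succ))}
        = ∑ j : Fin r, (if P j.succ then 1 else 0) := by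
      rw [cardsum]
      exact Finset.sum_congr rfl fun j _ =>
        if_congr (isTrivialFactor_congr (hfac j).some) rfl rfl
    have hIHn : ∑ j : Fin r, h1Dim k G (Subquot (N' j.castSucc) (N' j.succ))
        = ∑ j : Fin r, H j.succ :=
      Finset.sum_congr rfl fun j _ => h1Dim_congr (hfac j).some
    rw [hIHm, hIHn] at IH
    have hH0 : H 0 = h1Dim k G ↥W := h1Dim_congr e0
    by_cases hp : P 0
    · have htriv : IsTrivialFactor k G ↥W := (isTrivialFactor_congr e0).1 hp
      have hz : h1Dim k G ↥W = 0 := h1Dim_eq_zero_of_trivial hk htriv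
      have ho : Module.finrank k
          (grpRep k G ↥W).ρ.invariants = 1 :=
        invDim_eq_one_of_trivial htriv
      rw [hm, hn, if_pos hp]
      omega
    · rw [hm, hn, if_neg hp]
      omega

end Statement0Aux

/-- If `M` is a finite-dimensional `kG`-module with composition factors
`W_1, …, W_r`, exactly `m` of them trivial, `n = ∑ dim H¹(G, Wᵢ)`, `H¹(G, k) = 0` and `n < m`,
then the fixed-point space `M^G` has dimension at least `m - n`. -/
theorem statement0 (k G : Type) [Field k] [Group G] [Finite G]
    (hk : Subsingleton (groupCohomology.H1 (Rep.trivial k G k)))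
    (M : Type) [AddCommGroup M] [Module (MonoidAlgebra k G) M]
    [Module k M] [IsScalarTower k (MonoidAlgebra k G) M] [FiniteDimensional k M]
    (r : ℕ) (N : Fin (r + 1) → Submodule (MonoidAlgebra k G) M)
    (hmono : Monotone N) (hbot : N 0 = ⊥) (htop : N (Fin.last r) = ⊤)
    (hsimple : ∀ i : Fin r,
      IsSimpleModule (MonoidAlgebra k G) (Subquot (N i.castSucc) (N i.succ)))
    (m n : ℕ)
    (hm : m = Nat.card
      {i : Fin r // IsTrivialFactor k G (Subquot (N i.castSucc) (N i.succ))})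
    (hn : n = ∑ i : Fin r, h1Dim k G (Subquot (N i.castSucc) (N i.succ)))
    (hlt : n < m) :
    m - n ≤ @Module.finrank k
      (@Subtype _ fun x => @Membership.mem _ _
        (@SetLike.instMembership _ _ (@Submodule.setLike k _ _ _ (RestrictScalars.module k _ M)))
        (@Representation.invariants k G _ _ _ _ (RestrictScalars.module k _ M)
          (Representation.ofModule (k := k) (G := G) M)) x) DivisionSemiring.toSemiring
      (Submodule.addCommMonoid _) (Submodule.module _) := by
  rw [hm, hn]
  exact Statement0Aux.main hk r M N hmono hbot htop
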